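/- Let μ > 0, κ ≥ 0, a₀ ∈ ℝ, set a(t) = a₀ − μ t and β(t) = (a(t) − κ)/μ^{2/3}. Let u be a not-identically-zero C² solution of the Airy equation u''(s) = s·u(s), and suppose α* < β(0) satisfies u(α*) = 0 and u > 0 on (α*, β(0)]. Then y(t) := −μ^{1/3} u'(β(t))/u(β(t)) solves the averaged high-frequency equation y'(t) = a(t) − κ − y(t)² on [0, t*) with t* := (a₀ − κ − μ^{2/3}α*)/μ, and y(t) → −∞ as t → (t*)⁻, where a(t*) = μ^{2/3} α* + κ. (With κ = A²/(2Ω²), this yields the high-frequency tipping location a_hf = μ^{2/3} α* + A²/(2Ω²): the delayed tipping μ^{2/3}α* is shifted by the square of the ratio of forcing amplitude A to frequency Ω.) -/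

import Mathlib

open Real Filter Topology
open Set

lemma airy_deriv_pos (u : ℝ → ℝ) (hu : ContDiff ℝ 2 u)
    (hairy : ∀ s, deriv (deriv u) s = s * u s)
    (αs b : ℝ) (hlt : αs < b) (hzero : u αs = 0)
    (hpos : ∀ s ∈ Set.Ioc αs b, 0 < u s) : 0 < deriv u αs := by
  have hud : Differentiable ℝ u := hu.differentiable (by norm_num)
  have hud2 : ContDiff ℝ 1 (deriv u) := by
    have := (contDiff_succ_iff_deriv (n := 1)).mp (by norm_num at hu ⊢; exact hu)
    exact this.2.2
  have hud' : Differentiable ℝ (deriv u) := hud2.differentiable (by norm_num)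
  -- nonneg
  have hd0 : 0 ≤ deriv u αs := by
    have h := (hud.differentiableAt (x := αs)).hasDerivAt
    have h' : HasDerivWithinAt u (deriv u αs) (Ioi αs) αs := h.hasDerivWithinAt
    rw [hasDerivWithinAt_iff_tendsto_slope] at h'
    have hmem : Ioi αs \ {αs} = Ioi αs := by
      ext x; simp only [mem_diff, mem_Ioi, mem_singleton_iff, and_iff_left_iff_imp]
      intro hx; exact ne_of_gt hx
    rw [hmem] at h'
    refine ge_of_tendsto h' ?_
    filter_upwards [Ioc_mem_nhdsGT_of_mem ⟨le_refl αs, hlt⟩] with x hx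
    rw [slope_def_field, hzero, sub_zero]
    exact div_nonneg (hpos x hx).le (sub_nonneg.mpr hx.1.le)
  rcases hd0.lt_or_eq with h | h
  · exact h
  -- if deriv u αs = 0, then u ≡ 0 on [αs, b] by ODE uniqueness, contradiction
  exfalso
  set C : ℝ := max |αs| |b| with hC
  have hC0 : 0 ≤ C := le_trans (abs_nonneg _) (le_max_left _ _)
  set K : NNReal := ⟨max 1 C, le_trans zero_le_one (le_max_left _ _)⟩ with hK
  set v : ℝ → ℝ × ℝ → ℝ × ℝ := fun t x => (x.2, (max (-C) (min C t)) * x.1) with hv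
  have hcl : ∀ t, |max (-C) (min C t)| ≤ C := by
    intro t
    rw [abs_le]
    constructor
    · exact le_max_left _ _
    · exact max_le (neg_le_self hC0) (min_le_left _ _)
  have hlip : ∀ t, LipschitzWith K (v t) := by
    intro t
    apply LipschitzWith.of_dist_le_mul
    intro x y
    rw [Prod.dist_eq, Prod.dist_eq]
    simp only [hv]
    simp only [Real.dist_eq]
    rw [← mul_sub, abs_mul]
    have h1 : dist x.2 y.2 ≤ max 1 C * max |x.1 - y.1| |x.2 - y.2| := by
      rw [Real.dist_eq]
      calc |x.2 - y.2| ≤ max |x.1 - y.1| |x.2 - y.2| := le_max_right _ _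
        _ ≤ max 1 C * max |x.1 - y.1| |x.2 - y.2| := by
            nlinarith [le_max_left (1:ℝ) C, abs_nonneg (x.1-y.1), abs_nonneg (x.2-y.2),
              le_max_left |x.1 - y.1| |x.2 - y.2|]
    have h2 : |max (-C) (min C t)| * |x.1 - y.1| ≤ max 1 C * max |x.1 - y.1| |x.2 - y.2| := by
      calc |max (-C) (min C t)| * |x.1 - y.1| ≤ C * |x.1 - y.1| :=
            mul_le_mul_of_nonneg_right (hcl t) (abs_nonneg _)
        _ ≤ max 1 C * max |x.1 - y.1| |x.2 - y.2| := by
            apply mul_le_mul (le_max_right _ _) (le_max_left _ _) (abs_nonneg _)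
              (le_trans zero_le_one (le_max_left _ _))
    have : (K : ℝ) = max 1 C := rfl
    rw [this]
    exact max_le (by simpa [Real.dist_eq] using h1) (by simpa [Real.dist_eq] using h2)
  set g : ℝ → ℝ × ℝ := fun s => (u s, deriv u s) with hg
  have hgd : ∀ t ∈ Ico αs b, HasDerivWithinAt g (v t (g t)) (Ici t) t := by
    intro t ht
    have ht1 : -C ≤ t := by
      rw [neg_le]
      exact le_trans (neg_le_abs t) (by
        rcases le_or_gt t 0 with h' | h'
        · calc |t| = -t := abs_of_nonpos h'
            _ ≤ -αs := by linarith [ht.1]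
            _ ≤ |αs| := by rw [← abs_neg]; exact le_abs_self _
            _ ≤ C := le_max_left _ _
        · calc |t| = t := abs_of_pos h'
            _ ≤ b := ht.2.le
            _ ≤ |b| := le_abs_self _
            _ ≤ C := le_max_right _ _)
    have ht2 : t ≤ C := by
      calc t ≤ b := ht.2.le
        _ ≤ |b| := le_abs_self _
        _ ≤ C := le_max_right _ _
    have hclt : max (-C) (min C t) = t := by
      rw [min_eq_right ht2, max_eq_right ht1]
    have h1 : HasDerivAt u (deriv u t) t := (hud.differentiableAt).hasDerivAt
    have h2 : HasDerivAt (deriv u) (t * u t) t := by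
      have := (hud'.differentiableAt (x := t)).hasDerivAt
      rwa [hairy t] at this
    have := h1.prodMk h2
    simp only [hv, hg, hclt]
    exact this.hasDerivWithinAt
  have hzd : ∀ t ∈ Ico αs b, HasDerivWithinAt (fun _ : ℝ => ((0 : ℝ), (0 : ℝ)))
      (v t ((0 : ℝ), (0 : ℝ))) (Ici t) t := by
    intro t ht
    simp only [hv, mul_zero]
    exact (hasDerivAt_const t _).hasDerivWithinAt
  have heq := ODE_solution_unique hlip
    (Continuous.continuousOn (by fun_prop))
    hgd (continuousOn_const) hzd (by simp [hg, hzero, ← h])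
  have := heq (mem_Icc.mpr ⟨hlt.le, le_refl b⟩)
  have hub : u b = 0 := congrArg Prod.fst this
  exact (hpos b ⟨hlt, le_refl b⟩).ne' hub

/-- With `a t = a₀ - μ t`, `β t = (a t - κ)/μ^(2/3)` and `u` a nontrivial `C²`
Airy solution with `u αs = 0`, `u > 0` on `(αs, β 0]`, the function
`y t = -μ^(1/3) u'(β t)/u(β t)` solves the averaged high-frequency equation
`y' = a t - κ - y²` on `[0, t⋆)` with `t⋆ = (a₀ - κ - μ^(2/3) αs)/μ`, blows up to `-∞` as
`t → t⋆⁻`, and `a t⋆ = μ^(2/3) αs + κ` (the high-frequency tipping location,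
with `κ = A²/(2Ω²)`). -/
theorem high_frequency_averaged_tipping
    (μ κ a₀ : ℝ) (hμ : 0 < μ) (hκ : 0 ≤ κ)
    (u : ℝ → ℝ) (hu : ContDiff ℝ 2 u) (hune : ∃ s, u s ≠ 0)
    (hairy : ∀ s, deriv (deriv u) s = s * u s)
    (a β : ℝ → ℝ)
    (ha : a = fun t => a₀ - μ * t)
    (hβ : β = fun t => (a t - κ) / μ ^ ((2 : ℝ) / 3))
    (αs : ℝ) (hlt : αs < β 0) (hzero : u αs = 0)
    (hpos : ∀ s ∈ Set.Ioc αs (β 0), 0 < u s)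
    (ts : ℝ) (hts : ts = (a₀ - κ - μ ^ ((2 : ℝ) / 3) * αs) / μ)
    (y : ℝ → ℝ)
    (hy : y = fun t => -μ ^ ((1 : ℝ) / 3) * deriv u (β t) / u (β t)) :
    (∀ t ∈ Set.Ico (0 : ℝ) ts, HasDerivAt y (a t - κ - (y t) ^ 2) t) ∧
    Tendsto y (𝓝[<] ts) atBot ∧
    a ts = μ ^ ((2 : ℝ) / 3) * αs + κ := by
  have hud : Differentiable ℝ u := hu.differentiable (by norm_num)
  have hud2 : ContDiff ℝ 1 (deriv u) := by
    have := (contDiff_succ_iff_deriv (n := 1)).mp (by norm_num at hu ⊢; exact hu)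
    exact this.2.2
  have hud' : Differentiable ℝ (deriv u) := hud2.differentiable (by norm_num)
  set c1 : ℝ := μ ^ ((1 : ℝ) / 3) with hc1
  set c2 : ℝ := μ ^ ((2 : ℝ) / 3) with hc2
  have hc1p : 0 < c1 := Real.rpow_pos_of_pos hμ _
  have hc2p : 0 < c2 := Real.rpow_pos_of_pos hμ _
  have hc11 : c1 * c1 = c2 := by
    rw [hc1, hc2, ← Real.rpow_add hμ]; norm_num
  have hc12 : c1 * c2 = μ := by
    rw [hc1, hc2, ← Real.rpow_add hμ]; norm_num
  -- β is affine
  have hβaff : ∀ t, β t = β 0 - c1 * t := by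
    intro t
    rw [hβ, ha]
    simp only
    field_simp
    linear_combination t * hc12
  have hβts : β ts = αs := by
    have h0 : β ts = (a₀ - μ * ts - κ) / c2 := by rw [hβ, ha]
    rw [h0, hts]
    field_simp
    ring
  have htspos : 0 < ts := by
    have h0 : β 0 - β ts = c1 * ts := by rw [hβaff ts]; ring
    rw [hβts] at h0
    nlinarith [hlt, hc1p]
  -- membership
  have hβmem : ∀ t ∈ Set.Ico (0 : ℝ) ts, β t ∈ Set.Ioc αs (β 0) := by
    intro t ht
    constructor
    · have h0 : β t - αs = c1 * (ts - t) := by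
        rw [hβaff t, ← hβts, hβaff ts]; ring
      nlinarith [ht.2, hc1p]
    · rw [hβaff]
      nlinarith [ht.1, hc1p]
  have hβd : ∀ t : ℝ, HasDerivAt β (-c1) t := by
    intro t
    rw [show β = fun t : ℝ => β 0 - c1 * t from funext hβaff]
    simpa using ((hasDerivAt_id t).const_mul c1).const_sub (β 0)
  -- part 1: the ODE
  have part1 : ∀ t ∈ Set.Ico (0 : ℝ) ts, HasDerivAt y (a t - κ - (y t) ^ 2) t := by
    intro t ht
    have hβt := hβmem t ht
    have hupos : 0 < u (β t) := hpos _ hβt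
    have hune' : u (β t) ≠ 0 := hupos.ne'
    have h1 : HasDerivAt u (deriv u (β t)) (β t) := (hud.differentiableAt).hasDerivAt
    have h2 : HasDerivAt (deriv u) (β t * u (β t)) (β t) := by
      have := (hud'.differentiableAt (x := β t)).hasDerivAt
      rwa [hairy (β t)] at this
    have hN : HasDerivAt (fun t => -c1 * deriv u (β t)) (-c1 * (β t * u (β t) * (-c1))) t :=
      ((h2.comp t (hβd t))).const_mul (-c1)
    have hD : HasDerivAt (fun t => u (β t)) (deriv u (β t) * (-c1)) t := h1.comp t (hβd t)
    have hq := hN.div hD hune'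
    have haux : c2 * β t = a t - κ := by
      rw [hβ]; field_simp
    rw [hy]
    convert hq using 1
    show a t - κ - (-c1 * deriv u (β t) / u (β t)) ^ 2 = _
    rw [← haux, ← hc11]
    field_simp
    all_goals rfl
  -- part 3
  have part3 : a ts = c2 * αs + κ := by
    rw [ha, hts]
    field_simp
    ring
  -- part 2
  have hd := airy_deriv_pos u hu hairy αs (β 0) hlt hzero hpos
  have hIco : Set.Ico (0:ℝ) ts ∈ 𝓝[<] ts := by
    refine mem_of_superset (Ioo_mem_nhdsLT_of_mem ⟨htspos, le_refl ts⟩) ?_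
    exact fun x hx => ⟨hx.1.le, hx.2⟩
  have hβcont : Continuous β := by
    rw [hβ, ha]; fun_prop
  have hβtend : Tendsto β (𝓝[<] ts) (𝓝 αs) := by
    have := (hβcont.tendsto ts).mono_left (nhdsWithin_le_nhds (s := Set.Iio ts))
    rwa [hβts] at this
  have hutend : Tendsto (fun t => u (β t)) (𝓝[<] ts) (𝓝[>] (0:ℝ)) := by
    rw [tendsto_nhdsWithin_iff]
    constructor
    · have := (hud.continuous.tendsto αs).comp hβtend
      rwa [hzero] at this
    · filter_upwards [hIco] with t ht
      exact hpos _ (hβmem t ht)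
  have hinv : Tendsto (fun t => (u (β t))⁻¹) (𝓝[<] ts) atTop :=
    tendsto_inv_nhdsGT_zero.comp hutend
  have hnum : Tendsto (fun t => -c1 * deriv u (β t)) (𝓝[<] ts) (𝓝 (-c1 * deriv u αs)) := by
    exact (((hud2.continuous.tendsto αs).comp hβtend).const_mul (-c1))
  have part2 : Tendsto y (𝓝[<] ts) atBot := by
    have hC : -c1 * deriv u αs < 0 := by nlinarith
    have hmul := Filter.Tendsto.neg_mul_atTop hC hnum hinv
    have hyeq : y = fun t => (-c1 * deriv u (β t)) * (u (β t))⁻¹ := by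
      rw [hy]; funext t; rw [div_eq_mul_inv]
    rw [hyeq]
    exact hmul
  exact ⟨part1, part2, part3⟩
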